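/- Let G be a Fischer space of symplectic type, ℓ = {a,b,c} a line contained in two distinct complete quadrilaterals π (with extra points x,y,z, where lines are {a,y,z},{b,x,z},{c,x,y}) and π' (with extra points p,q,r, lines {a,q,r},{b,p,r},{c,p,q}). If p ∼ x, then p ≁ y, p ≁ z, q ∼ y, q ≁ x, q ≁ z, r ∼ z, r ≁ x, r ≁ y, and the three points p∧x, q∧y, r∧z coincide in a single point w which is not collinear with any of a, b, c. -/
import Mathlib


/-- A partial triple system, given by a collinearity relation `col` and a map `third`
sending two distinct collinear points to the third point on their line. -/
structure IsPTS {P : Type*} (col : P → P → Prop) (third : P → P → P) : Prop where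
  symm : ∀ x y, col x y → col y x
  irrefl : ∀ x, ¬ col x x
  third_symm : ∀ x y, col x y → third x y = third y x
  col_third : ∀ x y, col x y → col x (third x y)
  third_ne_left : ∀ x y, col x y → third x y ≠ x
  third_ne_right : ∀ x y, col x y → third x y ≠ y
  third_third : ∀ x y, col x y → third x (third x y) = y
  unique_line : ∀ x y u v, col x y → col u v →
    x ∈ ({u, v, third u v} : Set P) → y ∈ ({u, v, third u v} : Set P) →
    ({x, y, third x y} : Set P) = {u, v, third u v}

/-- A subspace of a partial triple system: a set of points closed under taking
the third point of a line through two of its points. -/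
def IsSubspace {P : Type*} (col : P → P → Prop) (third : P → P → P) (S : Set P) : Prop :=
  ∀ x ∈ S, ∀ y ∈ S, col x y → third x y ∈ S

/-- The subspace generated by a set of points. -/
def fclosure {P : Type*} (col : P → P → Prop) (third : P → P → P) (T : Set P) : Set P :=
  ⋂₀ {S | T ⊆ S ∧ IsSubspace col third S}

/-- The line through two distinct collinear points, as a set. -/
def lineSet {P : Type*} (third : P → P → P) (x y : P) : Set P := {x, y, third x y}

/-- The six points of the complete quadrilateral (dual affine plane of order 2). -/
inductive CQPt | A | B | C | X | Y | Z
deriving DecidableEq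

/-- The "opposite point" involution of the complete quadrilateral. -/
def CQPt.opp : CQPt → CQPt
  | .A => .X | .X => .A | .B => .Y | .Y => .B | .C => .Z | .Z => .C

/-- Collinearity in the complete quadrilateral with lines
{A,B,C}, {A,Y,Z}, {B,X,Z}, {C,X,Y}: two points are collinear iff they are
distinct and not opposite. -/
def CQPt.col (p q : CQPt) : Prop := p ≠ q ∧ q ≠ p.opp

/-- The third point on the line through two distinct collinear points of the
complete quadrilateral. -/
def CQPt.third : CQPt → CQPt → CQPt
  | .A, .B => .C | .B, .A => .C | .A, .C => .B | .C, .A => .B | .B, .C => .A | .C, .B => .A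
  | .A, .Y => .Z | .Y, .A => .Z | .A, .Z => .Y | .Z, .A => .Y | .Y, .Z => .A | .Z, .Y => .A
  | .B, .X => .Z | .X, .B => .Z | .B, .Z => .X | .Z, .B => .X | .X, .Z => .B | .Z, .X => .B
  | .C, .X => .Y | .X, .C => .Y | .C, .Y => .X | .Y, .C => .X | .X, .Y => .C | .Y, .X => .C
  | p, _ => p

/-- A set of points is a complete quadrilateral if it is the isomorphic image of
the standard one (preserving collinearity and the `third` operation). -/
def IsCQSet {P : Type*} (col : P → P → Prop) (third : P → P → P) (S : Set P) : Prop :=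
  ∃ f : CQPt → P, Function.Injective f ∧ Set.range f = S ∧
    (∀ u v, col (f u) (f v) ↔ CQPt.col u v) ∧
    (∀ u v, CQPt.col u v → f (CQPt.third u v) = third (f u) (f v))

/-- A set of points is an affine plane of order 3 if it is the isomorphic image of
`AG(2,3)` (any two distinct points collinear, third point `-(u+v)`). -/
def IsAPSet {P : Type*} (col : P → P → Prop) (third : P → P → P) (S : Set P) : Prop :=
  ∃ f : ZMod 3 × ZMod 3 → P, Function.Injective f ∧ Set.range f = S ∧
    (∀ u v, col (f u) (f v) ↔ u ≠ v) ∧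
    (∀ u v, u ≠ v → f (-(u + v)) = third (f u) (f v))

/-- A Fischer space: a partial triple system in which the subspace generated by two
distinct intersecting lines is a complete quadrilateral or an affine plane of order 3. -/
structure IsFischer {P : Type*} (col : P → P → Prop) (third : P → P → P)
    extends IsPTS col third : Prop where
  dichotomy : ∀ x y u v, col x y → col u v →
    lineSet third x y ≠ lineSet third u v →
    (lineSet third x y ∩ lineSet third u v).Nonempty →
    IsCQSet col third (fclosure col third (lineSet third x y ∪ lineSet third u v)) ∨
    IsAPSet col third (fclosure col third (lineSet third x y ∪ lineSet third u v))

/-- A Fischer space of symplectic type: the subspace generated by two distinct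
intersecting lines is always a complete quadrilateral. -/
structure IsSymplectic {P : Type*} (col : P → P → Prop) (third : P → P → P)
    extends IsPTS col third : Prop where
  cq : ∀ x y u v, col x y → col u v →
    lineSet third x y ≠ lineSet third u v →
    (lineSet third x y ∩ lineSet third u v).Nonempty →
    IsCQSet col third (fclosure col third (lineSet third x y ∪ lineSet third u v))

/-- The six points `a,b,c,x,y,z` form a complete quadrilateral with lines
{a,b,c}, {a,y,z}, {b,x,z}, {c,x,y}. -/
def IsCQThrough {P : Type*} (col : P → P → Prop) (third : P → P → P)
    (a b c x y z : P) : Prop :=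
  [a, b, c, x, y, z].Pairwise (· ≠ ·) ∧
  col a b ∧ third a b = c ∧
  col a y ∧ third a y = z ∧
  col b x ∧ third b x = z ∧
  col c x ∧ third c x = y ∧
  ¬ col a x ∧ ¬ col b y ∧ ¬ col c z

section Aux

instance : Fintype CQPt where
  elems := ⟨[CQPt.A, CQPt.B, CQPt.C, CQPt.X, CQPt.Y, CQPt.Z], by decide⟩
  complete := fun x => by cases x <;> decide

instance (p q : CQPt) : Decidable (CQPt.col p q) :=
  inferInstanceAs (Decidable (p ≠ q ∧ q ≠ p.opp))

set_option linter.constructorNameAsVariable false in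
lemma cq_two_rule : ∀ U V W : CQPt, U.col V → W.col U → W ≠ U.third V →
    (W.col V ↔ ¬ W.col (U.third V)) := by decide

set_option linter.constructorNameAsVariable false in
lemma cq_coin : ∀ U V W : CQPt, U.col V → U.col W → V.col W → V ≠ U.third W →
    (U.third V).col (U.third W) ∧ V.third W = (U.third V).third (U.third W) := by decide

variable {P : Type*} {col : P → P → Prop} {third : P → P → P}

lemma subset_fclosure {T : Set P} : T ⊆ fclosure col third T :=
  fun _ hx => Set.mem_sInter.2 fun _ hS => hS.1 hx

/-- The exactly-two rule: if `w` is collinear with `u` and `w` is not the third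
point of the line `{u, v, third u v}`, then `w` is collinear with exactly one of
`v`, `third u v`. -/
lemma two_rule (hS : IsSymplectic col third) {u v w : P} (huv : col u v)
    (hwu : col w u) (hne : w ≠ third u v) : (col w v ↔ ¬ col w (third u v)) := by
  by_cases hwv : w = v
  · subst hwv
    have h1 : ¬ col w w := hS.irrefl w
    have h2 : col w (third u w) := by
      have h := hS.col_third _ _ (hS.symm _ _ huv)
      rwa [hS.third_symm _ _ (hS.symm _ _ huv)] at h
    simp [h1, h2]
  · have hwu' : w ≠ u := fun h => hS.irrefl u (h ▸ hwu)
    have huw : col u w := hS.symm _ _ hwu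
    have hlines : lineSet third u v ≠ lineSet third u w := by
      intro h
      have hw : w ∈ lineSet third u v := by
        rw [h]; simp [lineSet]
      simp only [lineSet, Set.mem_insert_iff, Set.mem_singleton_iff] at hw
      rcases hw with h' | h' | h' <;> [exact hwu' h'; exact hwv h'; exact hne h']
    obtain ⟨f, hinj, hrange, hcol, hthird⟩ :=
      hS.cq u v u w huv huw hlines ⟨u, by simp [lineSet], by simp [lineSet]⟩
    have hsub : lineSet third u v ∪ lineSet third u w ⊆ Set.range f := by
      rw [hrange]; exact subset_fclosure
    obtain ⟨U, hU⟩ := hsub (show u ∈ _ by left; simp [lineSet])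
    obtain ⟨V, hV⟩ := hsub (show v ∈ _ by left; simp [lineSet])
    obtain ⟨W, hW⟩ := hsub (show w ∈ _ by right; simp [lineSet])
    have hUV : CQPt.col U V := (hcol U V).1 (by rw [hU, hV]; exact huv)
    have hWU : CQPt.col W U := (hcol W U).1 (by rw [hW, hU]; exact hwu)
    have ht : f (CQPt.third U V) = third u v := by rw [hthird U V hUV, hU, hV]
    have hne' : W ≠ CQPt.third U V := fun h => hne (by rw [← hW, h, ht])
    have e1 : col w v ↔ CQPt.col W V := by rw [← hW, ← hV]; exact hcol W V
    have e2 : col w (third u v) ↔ CQPt.col W (CQPt.third U V) := by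
      rw [← hW, ← ht]; exact hcol _ _
    rw [e1, e2]
    exact cq_two_rule U V W hUV hWU hne'

/-- The zero rule: if `w` is collinear with no two points of a line, it is
collinear with none. -/
lemma zero_rule (hS : IsSymplectic col third) {u v w : P} (huv : col u v)
    (h1 : ¬ col w u) (h2 : ¬ col w v) : ¬ col w (third u v) := by
  intro h3
  have htu : col (third u v) u := hS.symm _ _ (hS.col_third u v huv)
  have h4 : third (third u v) u = v := by
    rw [hS.third_symm _ _ htu]
    exact hS.third_third u v huv
  have hwv : w ≠ v := fun h => h1 (h ▸ hS.symm _ _ huv)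
  have := two_rule hS htu h3 (by rw [h4]; exact hwv)
  rw [h4] at this
  exact h1 (this.2 h2)

/-- Coincidence lemma: given two distinct lines through `c`, a collinearity
between non-`c` points `x`, `p` on each determines the pairing: `x ∧ p` equals
`(third c x) ∧ (third c p)`. -/
lemma coin_rule (hS : IsSymplectic col third) {c x p : P} (hcx : col c x)
    (hcp : col c p) (hxp : col x p) (hne : x ≠ third c p) :
    third x p = third (third c x) (third c p) := by
  have hxc : x ≠ c := fun h => hS.irrefl c (h ▸ hcx)
  have hxpne : x ≠ p := fun h => hS.irrefl p (h ▸ hxp)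
  have hlines : lineSet third c x ≠ lineSet third c p := by
    intro h
    have hx : x ∈ lineSet third c p := by
      rw [← h]; simp [lineSet]
    simp only [lineSet, Set.mem_insert_iff, Set.mem_singleton_iff] at hx
    rcases hx with h' | h' | h' <;> [exact hxc h'; exact hxpne h'; exact hne h']
  obtain ⟨f, hinj, hrange, hcol, hthird⟩ :=
    hS.cq c x c p hcx hcp hlines ⟨c, by simp [lineSet], by simp [lineSet]⟩
  have hsub : lineSet third c x ∪ lineSet third c p ⊆ Set.range f := by
    rw [hrange]; exact subset_fclosure
  obtain ⟨C₁, hC⟩ := hsub (show c ∈ _ by left; simp [lineSet])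
  obtain ⟨X₁, hX⟩ := hsub (show x ∈ _ by left; simp [lineSet])
  obtain ⟨P₁, hP⟩ := hsub (show p ∈ _ by right; simp [lineSet])
  have hCX : CQPt.col C₁ X₁ := (hcol C₁ X₁).1 (by rw [hC, hX]; exact hcx)
  have hCP : CQPt.col C₁ P₁ := (hcol C₁ P₁).1 (by rw [hC, hP]; exact hcp)
  have hXP : CQPt.col X₁ P₁ := (hcol X₁ P₁).1 (by rw [hX, hP]; exact hxp)
  have ht2 : f (CQPt.third C₁ P₁) = third c p := by rw [hthird C₁ P₁ hCP, hC, hP]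
  have hne' : X₁ ≠ CQPt.third C₁ P₁ := fun h => hne (by rw [← hX, h, ht2])
  obtain ⟨hcolT, heq⟩ := cq_coin C₁ X₁ P₁ hCX hCP hXP hne'
  have e1 : third x p = f (CQPt.third X₁ P₁) := by rw [hthird _ _ hXP, hX, hP]
  have e2 : third (third c x) (third c p) =
      f (CQPt.third (CQPt.third C₁ X₁) (CQPt.third C₁ P₁)) := by
    rw [hthird _ _ hcolT, hthird _ _ hCX, hthird _ _ hCP, hC, hX, hP]
  rw [e1, e2, heq]

end Aux

/-- In a Fischer space of symplectic type, let ℓ = {a,b,c} be a line contained in two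
distinct complete quadrilaterals π (extra points x,y,z) and π' (extra points p,q,r).
If `p ∼ x`, then the collinearities between {p,q,r} and {x,y,z} are exactly
p∼x, q∼y, r∼z, and `p∧x = q∧y = r∧z` is a single point `w` which is not collinear
with any of a, b, c. -/
theorem stmt15 {P : Type*} (col : P → P → Prop) (third : P → P → P)
    (hS : IsSymplectic col third)
    (a b c x y z p q r : P)
    (hπ : IsCQThrough col third a b c x y z)
    (hπ' : IsCQThrough col third a b c p q r)
    (hdiff : ({x, y, z} : Set P) ≠ {p, q, r})
    (hpx : col p x) :
    (¬ col p y ∧ ¬ col p z ∧ ¬ col q x ∧ col q y ∧ ¬ col q z ∧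
      ¬ col r x ∧ ¬ col r y ∧ col r z) ∧
    third p x = third q y ∧ third q y = third r z ∧
    ¬ col (third p x) a ∧ ¬ col (third p x) b ∧ ¬ col (third p x) c := by
  obtain ⟨-, hab, hab3, hay, hay3, hbx, hbx3, hcx, hcx3, hax, hby, hcz⟩ := hπ
  obtain ⟨-, -, -, haq, haq3, hbp, hbp3, hcp, hcp3, hap, hbq, hcr⟩ := hπ'
  have sm := hS.symm
  -- derived collinearities on the quadrilaterals
  have hcq' : col c q := hcp3 ▸ hS.col_third c p hcp
  have har : col a r := haq3 ▸ hS.col_third a q haq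
  have haz : col a z := hay3 ▸ hS.col_third a y hay
  have hbr : col b r := hbp3 ▸ hS.col_third b p hbp
  have haz3 : third a z = y := by
    have := hS.third_third a y hay; rwa [hay3] at this
  -- distinctness facts
  have hpy : p ≠ y := fun h => hby (h ▸ hbp)
  have hpz : p ≠ z := fun h => hcz (h ▸ hcp)
  have hxq : x ≠ q := fun h => hbq (h ▸ hbx)
  have hxr : x ≠ r := fun h => hcr (h ▸ hcx)
  have hqz : q ≠ z := fun h => hcz (h ▸ hcq')
  have hry : r ≠ y := fun h => hby (h ▸ hbr)
  -- collinearity pattern between {p,q,r} and {x,y,z}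
  have hPy : ¬ col p y := by
    have h := two_rule hS hcx (sm c p hcp) (by rw [hcx3]; exact hpy)
    rw [hcx3] at h; exact h.1 hpx
  have hPz : ¬ col p z := by
    have h := two_rule hS hbx (sm b p hbp) (by rw [hbx3]; exact hpz)
    rw [hbx3] at h; exact h.1 hpx
  have hXq : ¬ col x q := by
    have h := two_rule hS hcp (sm c x hcx) (by rw [hcp3]; exact hxq)
    rw [hcp3] at h; exact h.1 (sm p x hpx)
  have hXr : ¬ col x r := by
    have h := two_rule hS hbp (sm b x hbx) (by rw [hbp3]; exact hxr)
    rw [hbp3] at h; exact h.1 (sm p x hpx)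
  have hQx : ¬ col q x := fun h => hXq (sm q x h)
  have hRx : ¬ col r x := fun h => hXr (sm r x h)
  have hQz : ¬ col q z := by
    have h := zero_rule hS hbx (fun h' => hbq (sm q b h')) hQx
    rwa [hbx3] at h
  have hQy : col q y := by
    have h := two_rule hS hay (sm a q haq) (by rw [hay3]; exact hqz)
    rw [hay3] at h; exact h.2 hQz
  have hRy : ¬ col r y := by
    have h := zero_rule hS hcx (fun h' => hcr (sm r c h')) hRx
    rwa [hcx3] at h
  have hRz : col r z := by
    have h := two_rule hS haz (sm a r har) (by rw [haz3]; exact hry)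
    rw [haz3] at h; exact h.2 hRy
  -- coincidence of the three third points
  have h1 : third x p = third y q := by
    have h := coin_rule hS hcx hcp (sm p x hpx) (by rw [hcp3]; exact hxq)
    rwa [hcx3, hcp3] at h
  have h2 : third x p = third z r := by
    have h := coin_rule hS hbx hbp (sm p x hpx) (by rw [hbp3]; exact hxr)
    rwa [hbx3, hbp3] at h
  have hpx3 : third p x = third x p := hS.third_symm p x hpx
  have hqy3 : third q y = third y q := hS.third_symm q y hQy
  have hrz3 : third r z = third z r := hS.third_symm r z hRz
  have e_pq : third p x = third q y := by rw [hpx3, hqy3]; exact h1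
  have e_qr : third q y = third r z := by rw [hqy3, hrz3, ← h1]; exact h2
  -- w = third p x is not collinear with a, b, c
  have hAw : ¬ col a (third p x) := zero_rule hS hpx hap hax
  have hWa : ¬ col (third p x) a := fun h => hAw (sm _ _ h)
  have hbw : b ≠ third p x := by
    intro h
    have hx' : third p b = x := by rw [h]; exact hS.third_third p x hpx
    have : r = x := by rw [← hbp3, hS.third_symm b p hbp]; exact hx'
    exact hxr this.symm
  have hBw : ¬ col b (third p x) := (two_rule hS hpx hbp hbw).1 hbx
  have hWb : ¬ col (third p x) b := fun h => hBw (sm _ _ h)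
  have hcw : c ≠ third p x := by
    intro h
    have hx' : third p c = x := by rw [h]; exact hS.third_third p x hpx
    have : q = x := by rw [← hcp3, hS.third_symm c p hcp]; exact hx'
    exact hxq this.symm
  have hCw : ¬ col c (third p x) := (two_rule hS hpx hcp hcw).1 hcx
  have hWc : ¬ col (third p x) c := fun h => hCw (sm _ _ h)
  exact ⟨⟨hPy, hPz, hQx, hQy, hQz, hRx, hRy, hRz⟩, e_pq, e_qr, hWa, hWb, hWc⟩
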